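/- Let κ be a nonnegative integer, let r' ≥ 3 be an odd integer, set r = 2^κ · r', let n be a positive integer with 2^n > r, and let m be a positive integer. Then ∑_{s=1}^{r−1} (1/(2^n·m)) · |∑_{k=0}^{m−1} exp(2πi·k·r·⌊s·2^n/r⌉/2^n)|² = 2^κ · (2/(2^n·m)) · ∑_{j=1}^{(r'−1)/2} sin²(π·m·j/2^{n−κ}) / sin²(π·j/2^{n−κ}) + (2^κ − 1)·m/2^n. -/

import Mathlib

open Real Complex

lemma aux_abs_exp_sub_one (y : ℝ) :
    ‖Complex.exp ((y : ℂ) * I) - 1‖ = 2 * |Real.sin (y / 2)| := by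
  have h1 : Complex.exp ((y : ℂ) * I) - 1
      = Complex.exp (((y / 2 : ℝ) : ℂ) * I) * (2 * (Real.sin (y / 2) : ℂ) * I) := by
    have e1 : Complex.exp (((y / 2 : ℝ) : ℂ) * I) * Complex.exp (((y / 2 : ℝ) : ℂ) * I)
        = Complex.exp ((y : ℂ) * I) := by
      rw [← Complex.exp_add]; push_cast; ring_nf
    have e2 : Complex.exp (((y / 2 : ℝ) : ℂ) * I) * Complex.exp ((-(y / 2 : ℝ) : ℂ) * I)
        = 1 := by
      rw [← Complex.exp_add]; push_cast; ring_nf; exact Complex.exp_zero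
    have e3 : Complex.exp (((y / 2 : ℝ) : ℂ) * I) - Complex.exp ((-(y / 2 : ℝ) : ℂ) * I)
        = 2 * (Real.sin (y / 2) : ℂ) * I := by
      rw [Complex.exp_mul_I, Complex.exp_mul_I, Complex.cos_neg, Complex.sin_neg,
        Complex.ofReal_sin]
      ring
    calc Complex.exp ((y : ℂ) * I) - 1
        = Complex.exp (((y / 2 : ℝ) : ℂ) * I) *
            (Complex.exp (((y / 2 : ℝ) : ℂ) * I) - Complex.exp ((-(y / 2 : ℝ) : ℂ) * I)) := by
          rw [mul_sub, e1]
          push_cast at e2 ⊢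
          rw [e2]
      _ = _ := by rw [e3]
  rw [h1, norm_mul, Complex.norm_exp_ofReal_mul_I, one_mul, norm_mul, norm_mul, Complex.norm_I,
    Complex.norm_two, Complex.norm_real, Real.norm_eq_abs, mul_one]

lemma aux_dirichlet (m : ℕ) (x : ℝ) (hx : Real.sin (x / 2) ≠ 0) :
    (‖∑ k ∈ Finset.range m, Complex.exp ((k : ℂ) * ((x : ℂ) * I))‖) ^ 2
      = Real.sin (m * x / 2) ^ 2 / Real.sin (x / 2) ^ 2 := by
  have hz : Complex.exp ((x : ℂ) * I) ≠ 1 := by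
    intro h
    rcases Complex.exp_eq_one_iff.mp h with ⟨t, ht⟩
    have hx2 : (x : ℂ) = (t : ℂ) * (2 * π) := by
      have hI : ((x : ℂ)) * I = ((t : ℂ) * (2 * π)) * I := by rw [ht]; push_cast; ring
      exact mul_right_cancel₀ Complex.I_ne_zero hI
    have hx3 : x = (t : ℝ) * (2 * π) := by exact_mod_cast hx2
    apply hx
    rw [hx3, show (t : ℝ) * (2 * π) / 2 = (t : ℝ) * π by ring]
    exact Real.sin_int_mul_pi t
  have hsum : ∑ k ∈ Finset.range m, Complex.exp ((k : ℂ) * ((x : ℂ) * I))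
      = ∑ k ∈ Finset.range m, (Complex.exp ((x : ℂ) * I)) ^ k :=
    Finset.sum_congr rfl fun k _ => by rw [← Complex.exp_nat_mul]
  rw [hsum, geom_sum_eq hz, norm_div]
  have h1 : Complex.exp ((x : ℂ) * I) ^ m = Complex.exp (((m * x : ℝ) : ℂ) * I) := by
    rw [← Complex.exp_nat_mul]; push_cast; ring_nf
  rw [h1, aux_abs_exp_sub_one, aux_abs_exp_sub_one, div_pow, mul_pow, mul_pow, _root_.sq_abs, _root_.sq_abs]
  rw [mul_div_mul_left _ _ (by norm_num : (2:ℝ)^2 ≠ 0)]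

lemma aux_round (κ n : ℕ) (r' : ℕ) (hr'0 : 0 < r') (hκn : κ ≤ n) (s : ℕ) (ε : ℤ)
    (hdvd : (r' : ℤ) ∣ ((s : ℤ) * 2 ^ (n - κ) - ε)) (h2ε : 2 * |ε| < (r' : ℤ)) :
    ((2 ^ κ * r' : ℕ) : ℤ) * round (((s : ℝ) * 2 ^ n) / ((2 ^ κ * r' : ℕ) : ℝ))
      = (s : ℤ) * 2 ^ n - 2 ^ κ * ε := by
  obtain ⟨q, hq⟩ := hdvd
  have hq' : (s : ℤ) * 2 ^ (n - κ) = (r' : ℤ) * q + ε := by linarith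
  have h2n : (2 : ℝ) ^ n = 2 ^ κ * 2 ^ (n - κ) := by
    rw [← pow_add]; congr 1; omega
  have hr'R : (0 : ℝ) < (r' : ℝ) := by exact_mod_cast hr'0
  have hsR : (s : ℝ) * 2 ^ (n - κ) = (r' : ℝ) * q + ε := by exact_mod_cast hq'
  have hbig : (s : ℝ) * 2 ^ n = (2 : ℝ) ^ κ * ((r' : ℝ) * q + ε) := by
    rw [h2n]; linear_combination (2 : ℝ) ^ κ * hsR
  have key : ((s : ℝ) * 2 ^ n) / ((2 ^ κ * r' : ℕ) : ℝ) = (q : ℝ) + (ε : ℝ) / (r' : ℝ) := by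
    rw [hbig]; push_cast; field_simp
  rw [key, round_intCast_add]
  have h2εR : |(ε : ℝ)| * 2 < (r' : ℝ) := by
    have : |ε| * 2 < (r' : ℤ) := by linarith
    exact_mod_cast this
  have habs : |(ε : ℝ) / (r' : ℝ)| < 1 / 2 := by
    rw [abs_div, abs_of_pos hr'R, div_lt_iff₀ hr'R]
    linarith
  have hround0 : round ((ε : ℝ) / (r' : ℝ)) = 0 := by
    rw [round_eq_zero_iff]
    constructor
    · linarith [(abs_lt.mp habs).1]
    · linarith [(abs_lt.mp habs).2]
  rw [hround0, add_zero]
  have h2nZ : (2 : ℤ) ^ n = 2 ^ κ * 2 ^ (n - κ) := by rw [← pow_add]; congr 1; omega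
  push_cast
  rw [h2nZ]
  linear_combination (-(2 : ℤ) ^ κ) * hq'

lemma aux_count {M : Type*} [AddCommMonoid M] (f : ℕ → M) (a b : ℕ) :
    ∑ s ∈ Finset.range (a * b), f (s % b) = a • (∑ c ∈ Finset.range b, f c) := by
  induction a with
  | zero => simp
  | succ a ih =>
    have h1 : Finset.range ((a + 1) * b) = Finset.range (a * b + b) := by
      congr 1; ring
    rw [h1, Finset.range_eq_Ico, ← Finset.sum_Ico_consecutive _ (Nat.zero_le (a * b))
      (Nat.le_add_right _ _), ← Finset.range_eq_Ico, ih, Finset.sum_Ico_eq_sum_range]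
    simp only [Nat.add_sub_cancel_left]
    have h2 : ∀ i ∈ Finset.range b, f ((a * b + i) % b) = f i := by
      intro i hi
      have : (a * b + i) % b = i := by
        rw [Nat.add_comm, Nat.mul_comm, Nat.add_mul_mod_self_left,
          Nat.mod_eq_of_lt (Finset.mem_range.mp hi)]
      rw [this]
    rw [Finset.sum_congr rfl h2, succ_nsmul]

theorem stmt_4 (κ r' n m : ℕ) (hr'3 : 3 ≤ r') (hodd : Odd r')
    (r : ℕ) (hr : r = 2 ^ κ * r') (hn : 0 < n) (hrn : r < 2 ^ n) (hm : 0 < m) :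
    ∑ s ∈ Finset.Icc 1 (r - 1),
        (1 / ((2 : ℝ) ^ n * m)) *
          (‖∑ k ∈ Finset.range m,
            Complex.exp (2 * Real.pi * Complex.I * k * r *
              ((round (((s : ℝ) * 2 ^ n) / r) : ℤ) : ℂ) / 2 ^ n)‖) ^ 2
      =
    (2 : ℝ) ^ κ * (2 / ((2 : ℝ) ^ n * m)) *
        ∑ j ∈ Finset.Icc 1 ((r' - 1) / 2),
          Real.sin (Real.pi * m * j / 2 ^ (n - κ)) ^ 2 /
            Real.sin (Real.pi * j / 2 ^ (n - κ)) ^ 2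
      + ((2 : ℝ) ^ κ - 1) * m / 2 ^ n := by
  have hr'0 : 0 < r' := by omega
  haveI : NeZero r' := ⟨by omega⟩
  obtain ⟨w, hw⟩ := hodd
  have hκn : κ < n := by
    have h1 : 2 ^ κ < 2 ^ n := by
      calc 2 ^ κ ≤ 2 ^ κ * r' := Nat.le_mul_of_pos_right _ hr'0
        _ < 2 ^ n := hr ▸ hrn
    exact (Nat.pow_lt_pow_iff_right (by norm_num)).mp h1
  have hr'2N : r' < 2 ^ (n - κ) := by
    have h1 : 2 ^ κ * r' < 2 ^ κ * 2 ^ (n - κ) := by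
      rw [← pow_add, show κ + (n - κ) = n by omega]; exact hr ▸ hrn
    exact Nat.lt_of_mul_lt_mul_left h1
  set t : ℕ := (r' - 1) / 2 with ht
  set E : ℕ → ℤ := fun s => ((s : ZMod r') * 2 ^ (n - κ)).valMinAbs with hE
  set g : ℤ → ℝ := fun j =>
    (‖∑ k ∈ Finset.range m,
      Complex.exp ((k : ℂ) * (((-(2 * Real.pi * (j : ℝ)) / 2 ^ (n - κ) : ℝ) : ℂ) *
        Complex.I))‖) ^ 2 with hg
  -- basic facts about E
  have hE2 : ∀ s : ℕ, 2 * |E s| < (r' : ℤ) := by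
    intro s
    have h1 : (E s).natAbs ≤ r' / 2 := ZMod.natAbs_valMinAbs_le _
    rw [Int.abs_eq_natAbs]
    omega
  have hEdvd : ∀ s : ℕ, (r' : ℤ) ∣ ((s : ℤ) * 2 ^ (n - κ) - E s) := by
    intro s
    rw [← ZMod.intCast_zmod_eq_zero_iff_dvd]
    push_cast
    rw [ZMod.coe_valMinAbs]
    push_cast
    ring
  have hE0 : E 0 = 0 := by
    simp [hE, ZMod.valMinAbs_zero]
  -- the key term computation
  have hterm : ∀ s : ℕ,
      (‖∑ k ∈ Finset.range m,
        Complex.exp (2 * Real.pi * Complex.I * k * r *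
          ((round (((s : ℝ) * 2 ^ n) / r) : ℤ) : ℂ) / 2 ^ n)‖) ^ 2 = g (E s) := by
    intro s
    have hround : (r : ℤ) * round (((s : ℝ) * 2 ^ n) / (r : ℝ)) =
        (s : ℤ) * 2 ^ n - 2 ^ κ * E s := by
      rw [hr]
      exact aux_round κ n r' hr'0 (le_of_lt hκn) s (E s) (hEdvd s) (hE2 s)
    rw [hg]
    congr 1
    refine congrArg norm (Finset.sum_congr rfl fun k _ => ?_)
    set ρ : ℤ := round (((s : ℝ) * 2 ^ n) / (r : ℝ)) with hρ
    have hrzC : (r : ℂ) * (ρ : ℂ) = (s : ℂ) * 2 ^ n - 2 ^ κ * ((E s : ℤ) : ℂ) := by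
      exact_mod_cast congrArg (fun z : ℤ => (z : ℂ)) hround
    have h2nC : (2 : ℂ) ^ n = 2 ^ κ * 2 ^ (n - κ) := by
      rw [← pow_add]; congr 1; omega
    have h2NC : (2 : ℂ) ^ (n - κ) ≠ 0 := pow_ne_zero _ two_ne_zero
    have h2κC : (2 : ℂ) ^ κ ≠ 0 := pow_ne_zero _ two_ne_zero
    have hA : 2 * (Real.pi : ℂ) * Complex.I * k * r * (ρ : ℂ) / 2 ^ n
        = ((k * s : ℕ) : ℂ) * (2 * (Real.pi : ℂ) * Complex.I)
          + (k : ℂ) * (((-(2 * Real.pi * ((E s : ℤ) : ℝ)) / 2 ^ (n - κ) : ℝ) : ℂ) *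
              Complex.I) := by
      have hcast : ((-(2 * Real.pi * ((E s : ℤ) : ℝ)) / 2 ^ (n - κ) : ℝ) : ℂ)
          = -(2 * (Real.pi : ℂ) * ((E s : ℤ) : ℂ)) / 2 ^ (n - κ) := by
        push_cast; ring
      rw [hcast]
      rw [show 2 * (Real.pi : ℂ) * Complex.I * k * r * (ρ : ℂ) / 2 ^ n
          = 2 * (Real.pi : ℂ) * Complex.I * k * ((r : ℂ) * (ρ : ℂ)) / 2 ^ n by ring, hrzC,
        h2nC]
      push_cast
      field_simp
      ring
    rw [hA, Complex.exp_add, Complex.exp_nat_mul_two_pi_mul_I, one_mul]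
  -- g at 0
  have hg0 : g 0 = (m : ℝ) ^ 2 := by
    rw [hg]
    simp
  -- g is even
  have hgeven : ∀ j : ℤ, g (-j) = g j := by
    intro j
    rw [hg]
    dsimp only
    have hconj : ∑ k ∈ Finset.range m,
        Complex.exp ((k : ℂ) * (((-(2 * Real.pi * ((-j : ℤ) : ℝ)) / 2 ^ (n - κ) : ℝ) : ℂ) *
          Complex.I))
        = (starRingEnd ℂ) (∑ k ∈ Finset.range m,
            Complex.exp ((k : ℂ) * (((-(2 * Real.pi * (j : ℝ)) / 2 ^ (n - κ) : ℝ) : ℂ) *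
              Complex.I))) := by
      rw [map_sum]
      refine Finset.sum_congr rfl fun k _ => ?_
      rw [← Complex.exp_conj]
      congr 1
      simp only [map_mul, Complex.conj_I, Complex.conj_ofReal, map_natCast]
      push_cast
      ring
    rw [hconj, Complex.norm_conj]
  -- g at positive j
  have hgpos : ∀ j : ℤ, 1 ≤ j → (j : ℝ) < 2 ^ (n - κ) →
      g j = Real.sin (Real.pi * m * j / 2 ^ (n - κ)) ^ 2 /
        Real.sin (Real.pi * j / 2 ^ (n - κ)) ^ 2 := by
    intro j h1 h2
    have hjpos : (0 : ℝ) < j := by exact_mod_cast h1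
    have h2Npos : (0 : ℝ) < 2 ^ (n - κ) := by positivity
    have hsin : Real.sin (Real.pi * j / 2 ^ (n - κ)) ≠ 0 := by
      refine ne_of_gt (Real.sin_pos_of_pos_of_lt_pi (by positivity) ?_)
      rw [mul_div_assoc]
      exact mul_lt_of_lt_one_right Real.pi_pos ((div_lt_one h2Npos).mpr h2)
    have hx : Real.sin ((-(2 * Real.pi * (j : ℝ)) / 2 ^ (n - κ)) / 2) ≠ 0 := by
      rw [show (-(2 * Real.pi * (j : ℝ)) / 2 ^ (n - κ)) / 2
          = -(Real.pi * j / 2 ^ (n - κ)) by ring, Real.sin_neg]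
      simpa using hsin
    rw [hg]
    dsimp only
    rw [aux_dirichlet m _ hx]
    rw [show ((m : ℝ) * (-(2 * Real.pi * (j : ℝ)) / 2 ^ (n - κ)) / 2)
        = -(Real.pi * m * j / 2 ^ (n - κ)) by ring,
      show (-(2 * Real.pi * (j : ℝ)) / 2 ^ (n - κ) / 2)
        = -(Real.pi * (j : ℝ) / 2 ^ (n - κ)) by ring,
      Real.sin_neg, Real.sin_neg, neg_sq, neg_sq]
  -- now the sum manipulations
  have S2 : ∑ s ∈ Finset.range r, g (E s)
      = g 0 + ∑ s ∈ Finset.Icc 1 (r - 1), g (E s) := by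
    have hins : Finset.range r = insert 0 (Finset.Icc 1 (r - 1)) := by
      ext x
      simp only [Finset.mem_range, Finset.mem_insert, Finset.mem_Icc]
      have : 0 < r := by rw [hr]; positivity
      omega
    rw [hins, Finset.sum_insert (by simp), hE0]
  have S3 : ∑ s ∈ Finset.range r, g (E s)
      = 2 ^ κ • ∑ c ∈ Finset.range r', g (E c) := by
    have hEmod : ∀ s : ℕ, g (E s) = (fun c => g (E c)) (s % r') := by
      intro s
      simp only [hE]
      rw [← ZMod.natCast_mod]
    calc ∑ s ∈ Finset.range r, g (E s)
        = ∑ s ∈ Finset.range (2 ^ κ * r'), (fun c => g (E c)) (s % r') := by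
          rw [← hr]; exact Finset.sum_congr rfl fun s _ => hEmod s
      _ = 2 ^ κ • ∑ c ∈ Finset.range r', g (E c) := aux_count (fun c => g (E c)) (2 ^ κ) r'
  have S4 : ∑ c ∈ Finset.range r', g (E c)
      = ∑ x : ZMod r', g ((x * 2 ^ (n - κ)).valMinAbs) := by
    refine Finset.sum_nbij' (fun c => (c : ZMod r')) (fun x => x.val) ?_ ?_ ?_ ?_ ?_
    · intro a _; exact Finset.mem_univ _
    · intro x _; exact Finset.mem_range.mpr (ZMod.val_lt x)
    · intro a ha; exact ZMod.val_cast_of_lt (Finset.mem_range.mp ha)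
    · intro x _; exact ZMod.natCast_rightInverse x
    · intro a _; rfl
  have S5 : ∑ x : ZMod r', g ((x * 2 ^ (n - κ)).valMinAbs)
      = ∑ y : ZMod r', g (y.valMinAbs) := by
    have hco : Nat.Coprime 2 r' := Nat.coprime_two_left.mpr ⟨w, hw⟩
    have hu : IsUnit ((2 : ZMod r') ^ (n - κ)) := by
      refine IsUnit.pow _ ?_
      have := (ZMod.unitOfCoprime 2 hco).isUnit
      rwa [show ((ZMod.unitOfCoprime 2 hco : (ZMod r')ˣ) : ZMod r') = (2 : ZMod r') by
        rw [ZMod.coe_unitOfCoprime]; norm_num] at this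
    obtain ⟨u, hu⟩ := hu
    exact Fintype.sum_bijective (· * (2 : ZMod r') ^ (n - κ))
      (hu ▸ Units.mulRight_bijective u)
      _ (fun y => g (y.valMinAbs)) (fun x => rfl)
  have S6 : ∑ y : ZMod r', g (y.valMinAbs)
      = ∑ j ∈ Finset.Icc (-(t : ℤ)) (t : ℤ), g j := by
    refine Finset.sum_nbij' (fun y => y.valMinAbs) (fun j => ((j : ℤ) : ZMod r'))
      ?_ ?_ ?_ ?_ ?_
    · intro y _
      have h1 : y.valMinAbs.natAbs ≤ r' / 2 := ZMod.natAbs_valMinAbs_le y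
      simp only [Finset.mem_Icc]
      omega
    · intro j _; exact Finset.mem_univ _
    · intro y _; exact ZMod.coe_valMinAbs y
    · intro j hj
      rw [Finset.mem_Icc] at hj
      rw [ZMod.valMinAbs_spec]
      refine ⟨rfl, ?_, ?_⟩ <;> omega
    · intro y _; rfl
  have S7 : ∑ j ∈ Finset.Icc (-(t : ℤ)) (t : ℤ), g j
      = g 0 + 2 * ∑ j ∈ Finset.Icc (1 : ℤ) (t : ℤ), g j := by
    have hsplit : Finset.Icc (-(t : ℤ)) (t : ℤ)
        = Finset.Icc (-(t : ℤ)) (-1) ∪ Finset.Icc (0 : ℤ) (t : ℤ) := by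
      ext x
      simp only [Finset.mem_Icc, Finset.mem_union]
      omega
    have hdisj : Disjoint (Finset.Icc (-(t : ℤ)) (-1)) (Finset.Icc (0 : ℤ) (t : ℤ)) := by
      rw [Finset.disjoint_left]
      intro a ha hb
      rw [Finset.mem_Icc] at ha hb
      omega
    rw [hsplit, Finset.sum_union hdisj]
    have h1 : Finset.Icc (0 : ℤ) (t : ℤ) = insert 0 (Finset.Icc (1 : ℤ) (t : ℤ)) := by
      ext x
      simp only [Finset.mem_Icc, Finset.mem_insert]
      omega
    have h2 : ∑ j ∈ Finset.Icc (-(t : ℤ)) (-1), g j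
        = ∑ j ∈ Finset.Icc (1 : ℤ) (t : ℤ), g j := by
      refine Finset.sum_nbij' (fun j => -j) (fun j => -j) ?_ ?_ ?_ ?_ ?_
      · intro a ha; simp only [Finset.mem_Icc] at ha ⊢; omega
      · intro a ha; simp only [Finset.mem_Icc] at ha ⊢; omega
      · intro a _; ring
      · intro a _; ring
      · intro a _; exact (hgeven a).symm
    rw [h1, Finset.sum_insert (by simp), h2]
    ring
  have S8 : ∑ j ∈ Finset.Icc (1 : ℤ) (t : ℤ), g j
      = ∑ j ∈ Finset.Icc 1 t,
          Real.sin (Real.pi * m * j / 2 ^ (n - κ)) ^ 2 /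
            Real.sin (Real.pi * j / 2 ^ (n - κ)) ^ 2 := by
    refine Finset.sum_nbij' (fun j => j.toNat) (fun j => (j : ℤ)) ?_ ?_ ?_ ?_ ?_
    · intro a ha; simp only [Finset.mem_Icc] at ha ⊢; omega
    · intro a ha; simp only [Finset.mem_Icc] at ha ⊢; omega
    · intro a ha; simp only [Finset.mem_Icc] at ha; omega
    · intro a ha; simp only [Finset.mem_Icc] at ha; omega
    · intro a ha
      simp only [Finset.mem_Icc] at ha
      have hcast : ((a.toNat : ℕ) : ℝ) = (a : ℝ) := by
        have := Int.toNat_of_nonneg (by omega : (0 : ℤ) ≤ a)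
        exact_mod_cast congrArg (fun z : ℤ => (z : ℝ)) this
      have hlt : (a : ℝ) < 2 ^ (n - κ) := by
        have h1 : (a : ℝ) ≤ (t : ℝ) := by exact_mod_cast ha.2
        have h2 : (t : ℝ) < ((2 ^ (n - κ) : ℕ) : ℝ) := by
          exact_mod_cast (by omega : t < 2 ^ (n - κ))
        push_cast at h2
        linarith
      rw [hgpos a ha.1 hlt, hcast]
  -- assemble
  have hIcc : ∑ s ∈ Finset.Icc 1 (r - 1), g (E s)
      = (2 : ℝ) ^ κ * ((m : ℝ) ^ 2
          + 2 * ∑ j ∈ Finset.Icc 1 t,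
              Real.sin (Real.pi * m * j / 2 ^ (n - κ)) ^ 2 /
                Real.sin (Real.pi * j / 2 ^ (n - κ)) ^ 2)
        - (m : ℝ) ^ 2 := by
    have hchain : ∑ s ∈ Finset.range r, g (E s)
        = (2 : ℝ) ^ κ * ((m : ℝ) ^ 2
            + 2 * ∑ j ∈ Finset.Icc 1 t,
                Real.sin (Real.pi * m * j / 2 ^ (n - κ)) ^ 2 /
                  Real.sin (Real.pi * j / 2 ^ (n - κ)) ^ 2) := by
      rw [S3, S4, S5, S6, S7, S8, hg0, nsmul_eq_mul]
      push_cast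
      ring
    have := S2
    rw [hchain, hg0] at this
    linarith
  calc ∑ s ∈ Finset.Icc 1 (r - 1),
        (1 / ((2 : ℝ) ^ n * m)) *
          (‖∑ k ∈ Finset.range m,
            Complex.exp (2 * Real.pi * Complex.I * k * r *
              ((round (((s : ℝ) * 2 ^ n) / r) : ℤ) : ℂ) / 2 ^ n)‖) ^ 2
      = ∑ s ∈ Finset.Icc 1 (r - 1), (1 / ((2 : ℝ) ^ n * m)) * g (E s) :=
        Finset.sum_congr rfl fun s _ => by rw [hterm s]
    _ = (1 / ((2 : ℝ) ^ n * m)) * ∑ s ∈ Finset.Icc 1 (r - 1), g (E s) := by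
        rw [Finset.mul_sum]
    _ = _ := by
        rw [hIcc]
        have hmR : (m : ℝ) ≠ 0 := by positivity
        have h2nR : (2 : ℝ) ^ n ≠ 0 := by positivity
        field_simp
        ring
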